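/- Consider a standard-form LP min ⟨c, x⟩ subject to Ax = b, x ≥ 0, with unique optimal solution x* having basic/non-basic partition (B, N), where x*_N = 0, A_B is invertible, and the dual slack satisfies s*_B = 0 and s*_N > 0 componentwise. Then there exists μ > 0 (explicitly μ = σ_min(A_B)·min_j (s*_N)_j / (‖A_N‖ + σ_min(A_B))) such that for every feasible x (i.e., Ax = b, x ≥ 0), ⟨c, x⟩ - ⟨c, x*⟩ ≥ μ ‖x - x*‖. -/

import Mathlib

open Matrix

set_option maxHeartbeats 1000000 in
set_option synthInstance.maxHeartbeats 200000 in
/-- Error bound for a non-degenerate standard-form LP: if `x*` is the unique optimal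
solution with basis `B` (given by an injective `basis : Fin m → Fin n` selecting the basic
columns), `A_B` invertible, `x*` vanishing outside the basis, and the dual slack `s`
satisfies `s = 0` on basic indices and `s > 0` on non-basic indices (with
`c = Aᵀ y* + s` for a dual optimal `y*`), then there exists `μ > 0` such that
`⟨c, x⟩ - ⟨c, x*⟩ ≥ μ ‖x - x*‖` for every feasible `x`. -/
theorem lp_sharp_error_bound
    {m n : ℕ}
    (A : Matrix (Fin m) (Fin n) ℝ) (b : Fin m → ℝ) (c : EuclideanSpace ℝ (Fin n))
    (xstar : EuclideanSpace ℝ (Fin n))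
    (hfeas : A.mulVec xstar = b ∧ ∀ j, 0 ≤ xstar j)
    (hopt : ∀ x : EuclideanSpace ℝ (Fin n),
      A.mulVec x = b → (∀ j, 0 ≤ x j) → c ⬝ᵥ xstar ≤ c ⬝ᵥ x)
    (huniq : ∀ x : EuclideanSpace ℝ (Fin n),
      A.mulVec x = b → (∀ j, 0 ≤ x j) → c ⬝ᵥ x = c ⬝ᵥ xstar → x = xstar)
    (basis : Fin m → Fin n) (hbasis : Function.Injective basis)
    (hAB : IsUnit (Matrix.of fun i k => A i (basis k) : Matrix (Fin m) (Fin m) ℝ))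
    (hxN : ∀ j, j ∉ Set.range basis → xstar j = 0)
    (ystar : Fin m → ℝ) (s : Fin n → ℝ)
    (hdual : ∀ j, c j = Aᵀ.mulVec ystar j + s j)
    (hsB : ∀ k, s (basis k) = 0)
    (hsN : ∀ j, j ∉ Set.range basis → 0 < s j) :
    ∃ μ > 0, ∀ x : EuclideanSpace ℝ (Fin n),
      A.mulVec x = b → (∀ j, 0 ≤ x j) →
      μ * ‖x - xstar‖ ≤ c ⬝ᵥ x - c ⬝ᵥ xstar := by
  classical
  -- kernel vectors vanishing off the basis are zero
  have hker : ∀ d : Fin n → ℝ, A.mulVec d = 0 →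
      (∀ j, j ∉ Set.range basis → d j = 0) → d = 0 := by
    intro d hAd hdN
    obtain ⟨M, hM⟩ := hAB.exists_left_inv
    have h1 : (Matrix.of fun i k => A i (basis k)).mulVec (d ∘ basis) = 0 := by
      funext i
      have himg : ∑ j ∈ Finset.univ.image basis, (A i j * d j)
          = ∑ k : Fin m, A i (basis k) * d (basis k) :=
        Finset.sum_image (fun a _ b _ h => hbasis h)
      have hfull : ∑ j ∈ Finset.univ.image basis, (A i j * d j)
          = ∑ j : Fin n, A i j * d j := by
        apply Finset.sum_subset (Finset.subset_univ _)
        intro j _ hj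
        have hjr : j ∉ Set.range basis := by
          simp only [Finset.mem_image, Finset.mem_univ, true_and] at hj
          simpa [Set.mem_range] using hj
        rw [hdN j hjr, mul_zero]
      have : ∑ k : Fin m, A i (basis k) * d (basis k) = ∑ j : Fin n, A i j * d j :=
        himg.symm.trans hfull
      simpa [Matrix.mulVec, dotProduct, Function.comp] using
        this.trans (congrFun hAd i)
    have h2 : d ∘ basis = 0 := by
      have h2' := congrArg (fun v => M.mulVec v) h1
      simp only [Matrix.mulVec_mulVec, hM, Matrix.one_mulVec, Matrix.mulVec_zero] at h2'
      exact h2'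
    funext j
    by_cases hj : j ∈ Set.range basis
    · obtain ⟨k, rfl⟩ := hj
      exact congrFun h2 k
    · exact hdN j hj
  -- the projection onto non-basic coordinates
  let π : EuclideanSpace ℝ (Fin n) →ₗ[ℝ] EuclideanSpace ℝ (Fin n) :=
    { toFun := fun d => (WithLp.toLp 2 (fun j => if j ∈ Set.range basis then 0 else d j) :
        EuclideanSpace ℝ (Fin n))
      map_add' := by
        intro d e; ext j
        simp only [PiLp.add_apply]
        split_ifs <;> simp
      map_smul' := by
        intro r d; ext j
        simp only [PiLp.smul_apply, RingHom.id_apply]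
        split_ifs <;> simp }
  have hπ_apply : ∀ (d : EuclideanSpace ℝ (Fin n)) (j : Fin n),
      π d j = if j ∈ Set.range basis then 0 else d j := fun _ _ => rfl
  let Amap : EuclideanSpace ℝ (Fin n) →ₗ[ℝ] (Fin m → ℝ) :=
    { toFun := fun d => A.mulVec d
      map_add' := fun d e => A.mulVec_add d e
      map_smul' := fun r d => A.mulVec_smul r d }
  let V : Submodule ℝ (EuclideanSpace ℝ (Fin n)) := LinearMap.ker Amap
  let f : V →ₗ[ℝ] EuclideanSpace ℝ (Fin n) := π.comp V.subtype
  have hf_inj : Function.Injective f := by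
    rw [← LinearMap.ker_eq_bot]
    rw [LinearMap.ker_eq_bot']
    intro v hv
    have hvmem : A.mulVec (v : EuclideanSpace ℝ (Fin n)) = 0 := v.2
    have hvN : ∀ j, j ∉ Set.range basis → (v : EuclideanSpace ℝ (Fin n)) j = 0 := by
      intro j hj
      have := congrFun (congrArg (fun w : EuclideanSpace ℝ (Fin n) => (w : Fin n → ℝ)) hv) j
      simpa [f, hπ_apply, hj] using this
    exact Subtype.ext (WithLp.ofLp_injective 2 (by simpa using hker _ hvmem hvN))
  let e := LinearEquiv.ofInjective f hf_inj
  let T := LinearMap.toContinuousLinearMap (e.symm : LinearMap.range f →ₗ[ℝ] V)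
  set C : ℝ := ‖T‖ with hCdef
  have hC0 : 0 ≤ C := hCdef ▸ norm_nonneg T
  have hC : ∀ v : V, ‖(v : EuclideanSpace ℝ (Fin n))‖ ≤ C * ‖π (v : EuclideanSpace ℝ (Fin n))‖ := by
    intro v
    have h1 : e.symm (e v) = v := e.symm_apply_apply v
    have h2 : ‖T (e v)‖ ≤ C * ‖e v‖ := T.le_opNorm _
    have h3 : (T (e v) : V) = v := by
      simpa [T, LinearMap.coe_toContinuousLinearMap'] using h1
    have h4 : ‖e v‖ = ‖π (v : EuclideanSpace ℝ (Fin n))‖ := by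
      rw [Submodule.coe_norm]
      congr 1
    calc ‖(v : EuclideanSpace ℝ (Fin n))‖ = ‖T (e v)‖ := by rw [h3]; exact Submodule.norm_coe v
      _ ≤ C * ‖e v‖ := h2
      _ = C * ‖π (v : EuclideanSpace ℝ (Fin n))‖ := by rw [h4]
  -- minimal slack
  let Nfin : Finset (Fin n) := Finset.univ.filter (fun j => j ∉ Set.range basis)
  let smin : ℝ := if h : Nfin.Nonempty then Nfin.inf' h s else 1
  have hsmin_pos : 0 < smin := by
    by_cases h : Nfin.Nonempty
    · simp only [smin, dif_pos h]
      obtain ⟨j, hj, hje⟩ := Finset.exists_mem_eq_inf' h s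
      rw [hje]
      exact hsN j (by simpa [Nfin] using hj)
    · simp [smin, dif_neg h]
  have hsmin_le : ∀ j ∈ Nfin, smin ≤ s j := by
    intro j hj
    have hne : Nfin.Nonempty := ⟨j, hj⟩
    simp only [smin, dif_pos hne]
    exact Finset.inf'_le s hj
  refine ⟨smin / (C + 1), div_pos hsmin_pos (by linarith), ?_⟩
  intro x hAx hx0
  set d : EuclideanSpace ℝ (Fin n) := x - xstar with hd
  have hd_apply : ∀ j, d j = x j - xstar j := fun j => rfl
  have hAd : A.mulVec d = 0 := by
    have : A.mulVec d = A.mulVec x - A.mulVec xstar := A.mulVec_sub x xstar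
    rw [this, hAx, hfeas.1, sub_self]
  -- gap identity
  have hgap : c ⬝ᵥ x - c ⬝ᵥ xstar = ∑ j ∈ Nfin, s j * x j := by
    have h1 : c ⬝ᵥ x - c ⬝ᵥ xstar = ∑ j, c j * d j := by
      simp [dotProduct, hd_apply, mul_sub, Finset.sum_sub_distrib]
    have h2 : (∑ j, c j * d j)
        = (Aᵀ.mulVec ystar) ⬝ᵥ (d : Fin n → ℝ) + ∑ j, s j * d j := by
      simp only [dotProduct]
      rw [← Finset.sum_add_distrib]
      congr 1; funext j
      rw [hdual j]; ring
    have h3 : (Aᵀ.mulVec ystar) ⬝ᵥ (d : Fin n → ℝ) = 0 := by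
      rw [Matrix.mulVec_transpose, ← Matrix.dotProduct_mulVec, hAd,
        dotProduct_zero]
    have h4 : ∑ j, s j * d j = ∑ j ∈ Nfin, s j * x j := by
      rw [← Finset.sum_subset (Finset.subset_univ Nfin)]
      · apply Finset.sum_congr rfl
        intro j hj
        have hjN : j ∉ Set.range basis := by simpa [Nfin] using hj
        rw [hd_apply, hxN j hjN, sub_zero]
      · intro j _ hj
        have : j ∈ Set.range basis := by
          by_contra hc
          exact hj (by simpa [Nfin] using hc)
        obtain ⟨k, rfl⟩ := this
        rw [hsB k, zero_mul]
    rw [h1, h2, h3, h4, zero_add]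
  set t : ℝ := ∑ j ∈ Nfin, x j with ht
  have ht0 : 0 ≤ t := Finset.sum_nonneg fun j _ => hx0 j
  have h1 : smin * t ≤ c ⬝ᵥ x - c ⬝ᵥ xstar := by
    rw [hgap, ht, Finset.mul_sum]
    apply Finset.sum_le_sum
    intro j hj
    exact mul_le_mul_of_nonneg_right (hsmin_le j hj) (hx0 j)
  have h2 : ‖π d‖ ≤ t := by
    rw [EuclideanSpace.norm_eq]
    have hsum : ∑ j, ‖π d j‖ ^ 2 = ∑ j ∈ Nfin, (x j) ^ 2 := by
      rw [← Finset.sum_subset (Finset.subset_univ Nfin)]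
      · apply Finset.sum_congr rfl
        intro j hj
        have hjN : j ∉ Set.range basis := by simpa [Nfin] using hj
        rw [hπ_apply, if_neg hjN, hd_apply, hxN j hjN, sub_zero,
          Real.norm_eq_abs, sq_abs]
      · intro j _ hj
        have : j ∈ Set.range basis := by
          by_contra hc
          exact hj (by simpa [Nfin] using hc)
        rw [hπ_apply, if_pos this]
        simp
    rw [hsum]
    calc Real.sqrt (∑ j ∈ Nfin, (x j) ^ 2) ≤ Real.sqrt (t ^ 2) := by
          apply Real.sqrt_le_sqrt
          rw [ht]
          exact Finset.sum_sq_le_sq_sum_of_nonneg fun j _ => hx0 j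
      _ = t := Real.sqrt_sq ht0
  have h3 : ‖d‖ ≤ C * ‖π d‖ := hC ⟨d, hAd⟩
  have hπ0 : 0 ≤ ‖π d‖ := norm_nonneg _
  calc smin / (C + 1) * ‖x - xstar‖ = smin / (C + 1) * ‖d‖ := by rw [hd]
    _ ≤ smin / (C + 1) * ((C + 1) * ‖π d‖) := by
        have hle : ‖d‖ ≤ (C + 1) * ‖π d‖ := by nlinarith
        exact mul_le_mul_of_nonneg_left hle (div_pos hsmin_pos (by linarith)).le
    _ = smin * ‖π d‖ := by
        have hne : C + 1 ≠ 0 := by linarith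
        field_simp
    _ ≤ smin * t := mul_le_mul_of_nonneg_left h2 hsmin_pos.le
    _ ≤ c ⬝ᵥ x - c ⬝ᵥ xstar := h1
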